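/- arXiv:1311.3003 — 2 statements merged into one kernel-verified Lean document; each statement's English description precedes it below -/
import Mathlib

section
/- Let 0 < μ₁ ≤ ν₁ and μ₂ ≤ ν₂ with μ₁ < μ₂ and ν₁ < ν₂. Assume â(ν₁,ν₂) > 0 and b̂(ν₁)/â(ν₁,ν₂) < 1/2. Then â(ν₁,ν₂)·(1 − h(b̂(ν₁)/â(ν₁,ν₂))) ≤ â(μ₁,μ₂)·(1 − h(b̂(μ₁)/â(μ₁,μ₂))). That is, â(μ₁,μ₂)(1 − h(b̂(μ₁)/â(μ₁,μ₂))) is monotonically decreasing in both μ₁ and μ₂ on the region where b̂(μ₁)/â(μ₁,μ₂) < 1/2. -/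
/-- Binary entropy function (base-2). Note `Real.logb 2 0 = 0`, so `binEnt 0 = binEnt 1 = 0`. -/
noncomputable def binEnt (x : ℝ) : ℝ :=
  -x * Real.logb 2 x - (1 - x) * Real.logb 2 (1 - x)

/-- Estimate `b̂(μ)` of the phase-error detection rate of the single photon pulse. -/
noncomputable def bHat (α s p₀ μ : ℝ) : ℝ :=
  (s * (1 - Real.exp (-α * μ)) * Real.exp μ + (p₀ / 2) * (Real.exp μ - 1)) / μ

/-- Estimate `â(μ₁,μ₂)` of the detection rate of the single photon pulse. -/
noncomputable def aHat (α p₀ μ₁ μ₂ : ℝ) : ℝ :=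
  (μ₂ ^ 2 * Real.exp μ₁ * ((1 - Real.exp (-α * μ₁)) + p₀ * (1 - Real.exp (-μ₁)))
    - μ₁ ^ 2 * Real.exp μ₂ * ((1 - Real.exp (-α * μ₂)) + p₀ * (1 - Real.exp (-μ₂))))
  / (μ₁ * μ₂ * (μ₂ - μ₁))

open Real Set

/-- If `f` has nonnegative derivative on `[0,∞)`, it is monotone there. -/
private lemma le_of_deriv_nonneg' {f f' : ℝ → ℝ}
    (hf : ∀ x, 0 ≤ x → HasDerivAt f (f' x) x)
    (h' : ∀ x, 0 ≤ x → 0 ≤ f' x) {a b : ℝ} (ha : 0 ≤ a) (hab : a ≤ b) : f a ≤ f b := by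
  have hmono : MonotoneOn f (Ici (0:ℝ)) := by
    apply monotoneOn_of_hasDerivWithinAt_nonneg (convex_Ici 0)
    · exact fun x hx => ((hf x hx).continuousAt).continuousWithinAt
    · intro x hx
      rw [interior_Ici] at hx
      exact ((hf x (le_of_lt hx)).hasDerivWithinAt)
    · intro x hx
      rw [interior_Ici] at hx
      exact h' x (le_of_lt hx)
  exact hmono ha (le_trans ha hab) hab

private lemma expcx (c x : ℝ) : HasDerivAt (fun t : ℝ => Real.exp (c * t)) (c * Real.exp (c * x)) x := by
  have h : HasDerivAt (fun t : ℝ => c * t) c x := by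
    simpa using (hasDerivAt_id x).const_mul c
  simpa [mul_comm] using h.exp

private lemma expxc (x c : ℝ) : HasDerivAt (fun t : ℝ => Real.exp (t * x)) (x * Real.exp (c * x)) c := by
  have h : HasDerivAt (fun t : ℝ => t * x) x c := by
    simpa using (hasDerivAt_id c).mul_const x
  simpa [mul_comm] using h.exp

/-- `M c x := c·x·e^{cx} − e^{cx} + 1 ≥ 0` for `c, x ≥ 0`. -/
private lemma M_nonneg {c x : ℝ} (hc : 0 ≤ c) (hx : 0 ≤ x) :
    0 ≤ c * x * Real.exp (c * x) - Real.exp (c * x) + 1 := by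
  have := le_of_deriv_nonneg' (f := fun t => t * x * Real.exp (t * x) - Real.exp (t * x) + 1)
    (f' := fun t => t * x ^ 2 * Real.exp (t * x)) ?_ ?_ le_rfl hc
  · simpa using this
  · intro t _
    have h1 : HasDerivAt (fun u : ℝ => u * x) x t := by simpa using (hasDerivAt_id t).mul_const x
    have h2 : HasDerivAt (fun u : ℝ => Real.exp (u * x)) (x * Real.exp (t * x)) t := expxc x t
    have := ((h1.mul h2).sub h2).add_const 1
    refine this.congr_deriv ?_
    ring
  · intro t ht
    positivity

/-- `M` is monotone in `c`. -/
private lemma M_mono {c x : ℝ} (hc : 0 ≤ c) (hc1 : c ≤ 1) (hx : 0 ≤ x) :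
    c * x * Real.exp (c * x) - Real.exp (c * x) + 1
      ≤ x * Real.exp x - Real.exp x + 1 := by
  have := le_of_deriv_nonneg' (f := fun t => t * x * Real.exp (t * x) - Real.exp (t * x) + 1)
    (f' := fun t => t * x ^ 2 * Real.exp (t * x)) ?_ ?_ hc hc1
  · simpa using this
  · intro t _
    have h1 : HasDerivAt (fun u : ℝ => u * x) x t := by simpa using (hasDerivAt_id t).mul_const x
    have h2 : HasDerivAt (fun u : ℝ => Real.exp (u * x)) (x * Real.exp (t * x)) t := expxc x t
    have := ((h1.mul h2).sub h2).add_const 1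
    refine this.congr_deriv ?_
    ring
  · intro t ht
    positivity

/-- `N c x := e^{cx}(c²x²−2cx+2) − 2 ≥ 0` for `c,x ≥ 0`. -/
private lemma N_nonneg {c x : ℝ} (hc : 0 ≤ c) (hx : 0 ≤ x) :
    0 ≤ Real.exp (c * x) * (c ^ 2 * x ^ 2 - 2 * c * x + 2) - 2 := by
  have := le_of_deriv_nonneg' (f := fun t => Real.exp (t * x) * (t ^ 2 * x ^ 2 - 2 * t * x + 2) - 2)
    (f' := fun t => t ^ 2 * x ^ 3 * Real.exp (t * x)) ?_ ?_ le_rfl hc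
  · simpa using this
  · intro t _
    have h2 : HasDerivAt (fun u : ℝ => Real.exp (u * x)) (x * Real.exp (t * x)) t := expxc x t
    have h3 : HasDerivAt (fun u : ℝ => u ^ 2 * x ^ 2 - 2 * u * x + 2) (2 * t * x ^ 2 - 2 * x) t := by
      have ha : HasDerivAt (fun u : ℝ => u ^ 2) (2 * t) t := by simpa using hasDerivAt_pow 2 t
      have := ((ha.mul_const (x ^ 2)).sub ((hasDerivAt_id t).const_mul 2 |>.mul_const x)).add_const 2
      refine this.congr_deriv ?_
      ring
    have := (h2.mul h3).sub_const 2
    refine this.congr_deriv ?_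
    ring
  · intro t ht
    positivity

/-- `N` is monotone in `c`. -/
private lemma N_mono {c x : ℝ} (hc : 0 ≤ c) (hc1 : c ≤ 1) (hx : 0 ≤ x) :
    Real.exp (c * x) * (c ^ 2 * x ^ 2 - 2 * c * x + 2) - 2
      ≤ Real.exp x * (x ^ 2 - 2 * x + 2) - 2 := by
  have := le_of_deriv_nonneg' (f := fun t => Real.exp (t * x) * (t ^ 2 * x ^ 2 - 2 * t * x + 2) - 2)
    (f' := fun t => t ^ 2 * x ^ 3 * Real.exp (t * x)) ?_ ?_ hc hc1
  · simpa using this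
  · intro t _
    have h2 : HasDerivAt (fun u : ℝ => Real.exp (u * x)) (x * Real.exp (t * x)) t := expxc x t
    have h3 : HasDerivAt (fun u : ℝ => u ^ 2 * x ^ 2 - 2 * u * x + 2) (2 * t * x ^ 2 - 2 * x) t := by
      have ha : HasDerivAt (fun u : ℝ => u ^ 2) (2 * t) t := by simpa using hasDerivAt_pow 2 t
      have := ((ha.mul_const (x ^ 2)).sub ((hasDerivAt_id t).const_mul 2 |>.mul_const x)).add_const 2
      refine this.congr_deriv ?_
      ring
    have := (h2.mul h3).sub_const 2
    refine this.congr_deriv ?_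
    ring
  · intro t ht
    positivity


private lemma bHat_eq (α s p₀ μ : ℝ) :
    bHat α s p₀ μ
      = (s * (Real.exp μ - Real.exp ((1 - α) * μ)) + p₀ / 2 * (Real.exp μ - 1)) / μ := by
  have h : Real.exp (-α * μ) * Real.exp μ = Real.exp ((1 - α) * μ) := by
    rw [← Real.exp_add]; ring_nf
  unfold bHat
  congr 1
  linear_combination (-s) * h

private lemma bHat_pos {α s p₀ μ : ℝ} (hα : 0 < α) (hs0 : 0 ≤ s) (hp : 0 < p₀) (hμ : 0 < μ) :
    0 < bHat α s p₀ μ := by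
  unfold bHat
  apply div_pos _ hμ
  have h1 : Real.exp (-α * μ) ≤ 1 := Real.exp_le_one_iff.mpr (by nlinarith)
  have h2 : 1 < Real.exp μ := by
    rw [← Real.exp_zero]; exact Real.exp_lt_exp.mpr hμ
  have h3 : 0 < Real.exp μ := Real.exp_pos μ
  have h4 : 0 ≤ s * (1 - Real.exp (-α * μ)) * Real.exp μ :=
    mul_nonneg (mul_nonneg hs0 (by linarith)) h3.le
  nlinarith

/-- `bHat` is monotone in `μ` on `(0,∞)`. -/
private lemma bHat_mono {α s p₀ μ ν : ℝ} (hα : 0 < α) (hα1 : α ≤ 1) (hs0 : 0 ≤ s)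
    (hp : 0 < p₀) (hμ : 0 < μ) (hμν : μ ≤ ν) :
    bHat α s p₀ μ ≤ bHat α s p₀ ν := by
  set c := 1 - α with hc
  clear_value c
  have hc0 : 0 ≤ c := by rw [hc]; linarith
  have hc1 : c ≤ 1 := by rw [hc]; linarith
  rw [bHat_eq, bHat_eq]
  rw [← hc]
  set f : ℝ → ℝ := fun x => (s * (Real.exp x - Real.exp (c * x)) + p₀ / 2 * (Real.exp x - 1)) / x
    with hf
  show f μ ≤ f ν
  have key : MonotoneOn f (Ioi (0:ℝ)) := by
    apply monotoneOn_of_hasDerivWithinAt_nonneg (convex_Ioi 0)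
      (f' := fun x => ((s * (Real.exp x - c * Real.exp (c * x)) + p₀ / 2 * Real.exp x) * x
        - (s * (Real.exp x - Real.exp (c * x)) + p₀ / 2 * (Real.exp x - 1))) / x ^ 2)
    · intro x hx
      have hx0 : x ≠ 0 := ne_of_gt hx
      have hnum : HasDerivAt (fun x => s * (Real.exp x - Real.exp (c * x)) + p₀ / 2 * (Real.exp x - 1))
          (s * (Real.exp x - c * Real.exp (c * x)) + p₀ / 2 * Real.exp x) x := by
        have h1 := ((Real.hasDerivAt_exp x).sub (expcx c x)).const_mul s
        have h2 := ((Real.hasDerivAt_exp x).sub_const 1).const_mul (p₀ / 2)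
        exact h1.add h2
      have := (hnum.div (hasDerivAt_id x) hx0)
      simp only [hf]
      exact this.continuousAt.continuousWithinAt
    · intro x hx
      rw [interior_Ioi] at hx
      have hx0 : x ≠ 0 := ne_of_gt hx
      have hnum : HasDerivAt (fun x => s * (Real.exp x - Real.exp (c * x)) + p₀ / 2 * (Real.exp x - 1))
          (s * (Real.exp x - c * Real.exp (c * x)) + p₀ / 2 * Real.exp x) x := by
        have h1 := ((Real.hasDerivAt_exp x).sub (expcx c x)).const_mul s
        have h2 := ((Real.hasDerivAt_exp x).sub_const 1).const_mul (p₀ / 2)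
        exact h1.add h2
      have := (hnum.div (hasDerivAt_id x) hx0)
      refine HasDerivAt.hasDerivWithinAt ?_
      refine this.congr_deriv ?_
      simp only [id_eq, mul_one]
    · intro x hx
      rw [interior_Ioi] at hx
      have hx' : (0:ℝ) < x := hx
      have hx0 : (0:ℝ) < x ^ 2 := by positivity
      apply div_nonneg _ (le_of_lt hx0)
      have hM1 : 0 ≤ x * Real.exp x - Real.exp x + 1 := by
        have := M_nonneg (c := 1) (x := x) zero_le_one (le_of_lt hx)
        simpa using this
      have hMm := M_mono hc0 hc1 (le_of_lt hx')
      have e1 : (s * (Real.exp x - c * Real.exp (c * x)) + p₀ / 2 * Real.exp x) * x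
          - (s * (Real.exp x - Real.exp (c * x)) + p₀ / 2 * (Real.exp x - 1))
          = s * ((x * Real.exp x - Real.exp x + 1)
              - (c * x * Real.exp (c * x) - Real.exp (c * x) + 1))
            + p₀ / 2 * (x * Real.exp x - Real.exp x + 1) := by ring
      rw [e1]
      have t1 := mul_nonneg hs0 (sub_nonneg.mpr hMm)
      have t2 := mul_nonneg (by linarith : (0:ℝ) ≤ p₀ / 2) hM1
      linarith
  exact key hμ (lt_of_lt_of_le hμ hμν) hμν

section Gconv

variable (c p₀ : ℝ)

private noncomputable def Gfun (x : ℝ) : ℝ :=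
  ((1 + p₀) * Real.exp x - Real.exp (c * x) - p₀) / x

private noncomputable def G1fun (x : ℝ) : ℝ :=
  (((1 + p₀) * Real.exp x - c * Real.exp (c * x)) * x
    - ((1 + p₀) * Real.exp x - Real.exp (c * x) - p₀)) / x ^ 2

private noncomputable def G2fun (x : ℝ) : ℝ :=
  (((1 + p₀) * Real.exp x - c ^ 2 * Real.exp (c * x)) * x ^ 2
    - 2 * ((1 + p₀) * Real.exp x - c * Real.exp (c * x)) * x
    + 2 * ((1 + p₀) * Real.exp x - Real.exp (c * x) - p₀)) / x ^ 3

private lemma hasDeriv_G {x : ℝ} (hx : x ≠ 0) : HasDerivAt (Gfun c p₀) (G1fun c p₀ x) x := by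
  have hnum : HasDerivAt (fun x => (1 + p₀) * Real.exp x - Real.exp (c * x) - p₀)
      ((1 + p₀) * Real.exp x - c * Real.exp (c * x)) x := by
    simpa using (((Real.hasDerivAt_exp x).const_mul (1 + p₀)).sub (expcx c x)).sub_const p₀
  have := hnum.div (hasDerivAt_id x) hx
  refine this.congr_deriv ?_
  unfold G1fun
  simp only [id_eq]
  ring

private lemma hasDeriv_G1 {x : ℝ} (hx : x ≠ 0) : HasDerivAt (G1fun c p₀) (G2fun c p₀ x) x := by
  have hnum : HasDerivAt (fun x => ((1 + p₀) * Real.exp x - c * Real.exp (c * x)) * x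
      - ((1 + p₀) * Real.exp x - Real.exp (c * x) - p₀))
      (((1 + p₀) * Real.exp x - c ^ 2 * Real.exp (c * x)) * x) x := by
    have h1 : HasDerivAt (fun x => (1 + p₀) * Real.exp x - c * Real.exp (c * x))
        ((1 + p₀) * Real.exp x - c * (c * Real.exp (c * x))) x :=
      ((Real.hasDerivAt_exp x).const_mul (1 + p₀)).sub ((expcx c x).const_mul c)
    have h2 : HasDerivAt (fun x => (1 + p₀) * Real.exp x - Real.exp (c * x) - p₀)
        ((1 + p₀) * Real.exp x - c * Real.exp (c * x)) x := by
      simpa using (((Real.hasDerivAt_exp x).const_mul (1 + p₀)).sub (expcx c x)).sub_const p₀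
    have := (h1.mul (hasDerivAt_id x)).sub h2
    refine this.congr_deriv ?_
    simp only [id_eq]
    ring
  have hden : HasDerivAt (fun x : ℝ => x ^ 2) (2 * x) x := by
    simpa using hasDerivAt_pow 2 x
  have hden0 : x ^ 2 ≠ 0 := pow_ne_zero 2 hx
  have := hnum.div hden hden0
  refine this.congr_deriv ?_
  unfold G2fun
  field_simp
  ring

private lemma G2_nonneg {x : ℝ} (hc0 : 0 ≤ c) (hc1 : c ≤ 1) (hp : 0 < p₀) (hx : 0 < x) :
    0 ≤ G2fun c p₀ x := by
  unfold G2fun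
  apply div_nonneg _ (by positivity)
  have hN1 : 0 ≤ Real.exp x * (x ^ 2 - 2 * x + 2) - 2 := by
    have := N_nonneg (c := 1) (x := x) zero_le_one hx.le
    simpa using this
  have hNm := N_mono hc0 hc1 hx.le
  have e1 : ((1 + p₀) * Real.exp x - c ^ 2 * Real.exp (c * x)) * x ^ 2
      - 2 * ((1 + p₀) * Real.exp x - c * Real.exp (c * x)) * x
      + 2 * ((1 + p₀) * Real.exp x - Real.exp (c * x) - p₀)
      = p₀ * (Real.exp x * (x ^ 2 - 2 * x + 2) - 2)
        + ((Real.exp x * (x ^ 2 - 2 * x + 2) - 2)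
          - (Real.exp (c * x) * (c ^ 2 * x ^ 2 - 2 * c * x + 2) - 2)) := by ring
  rw [e1]
  have t1 := mul_nonneg hp.le hN1
  linarith

private lemma G_convex (hc0 : 0 ≤ c) (hc1 : c ≤ 1) (hp : 0 < p₀) :
    ConvexOn ℝ (Ioi (0:ℝ)) (Gfun c p₀) := by
  apply convexOn_of_hasDerivWithinAt2_nonneg (convex_Ioi 0)
    (f' := G1fun c p₀) (f'' := G2fun c p₀)
  · intro x hx
    exact (hasDeriv_G c p₀ (ne_of_gt hx)).continuousAt.continuousWithinAt
  · intro x hx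
    rw [interior_Ioi] at hx
    exact (hasDeriv_G c p₀ (ne_of_gt hx)).hasDerivWithinAt
  · intro x hx
    rw [interior_Ioi] at hx
    exact (hasDeriv_G1 c p₀ (ne_of_gt hx)).hasDerivWithinAt
  · intro x hx
    rw [interior_Ioi] at hx
    exact G2_nonneg c p₀ hc0 hc1 hp hx

end Gconv

/-- `aHat` in terms of `Gfun`. -/
private lemma aHat_eq {α p₀ m₁ m₂ : ℝ} (h1 : m₁ ≠ 0) (h2 : m₂ ≠ 0) (h12 : m₁ ≠ m₂) :
    aHat α p₀ m₁ m₂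
      = (m₂ * Gfun (1 - α) p₀ m₁ - m₁ * Gfun (1 - α) p₀ m₂) / (m₂ - m₁) := by
  have e1 : Real.exp (-α * m₁) = Real.exp ((1 - α) * m₁) / Real.exp m₁ := by
    rw [eq_div_iff (Real.exp_ne_zero m₁), ← Real.exp_add]; ring_nf
  have e2 : Real.exp (-m₁) = 1 / Real.exp m₁ := by
    rw [eq_div_iff (Real.exp_ne_zero m₁), ← Real.exp_add]; simp
  have e3 : Real.exp (-α * m₂) = Real.exp ((1 - α) * m₂) / Real.exp m₂ := by
    rw [eq_div_iff (Real.exp_ne_zero m₂), ← Real.exp_add]; ring_nf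
  have e4 : Real.exp (-m₂) = 1 / Real.exp m₂ := by
    rw [eq_div_iff (Real.exp_ne_zero m₂), ← Real.exp_add]; simp
  have hsub : m₂ - m₁ ≠ 0 := sub_ne_zero.mpr (Ne.symm h12)
  unfold aHat Gfun
  rw [e1, e2, e3, e4]
  field_simp
  ring

/-- `aHat` is antitone in the second argument. -/
private lemma aHat_anti_snd {α p₀ m₁ m₂ m₂' : ℝ} (hα : 0 < α) (hα1 : α ≤ 1) (hp : 0 < p₀)
    (h1 : 0 < m₁) (h12 : m₁ < m₂) (h22 : m₂ ≤ m₂') :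
    aHat α p₀ m₁ m₂' ≤ aHat α p₀ m₁ m₂ := by
  rcases eq_or_lt_of_le h22 with rfl | h22
  · exact le_refl _
  have hconv := G_convex (1 - α) p₀ (by linarith) (by linarith) hp
  set G := Gfun (1 - α) p₀ with hG
  have key := hconv.secant_mono (a := m₁) (x := m₂) (y := m₂') (mem_Ioi.mpr h1)
    (mem_Ioi.mpr (h1.trans h12)) (mem_Ioi.mpr (h1.trans (h12.trans h22)))
    (ne_of_gt h12) (ne_of_gt (h12.trans h22)) h22.le
  rw [aHat_eq (ne_of_gt h1) (ne_of_gt (h1.trans h12)) (ne_of_lt h12),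
    aHat_eq (ne_of_gt h1) (ne_of_gt (h1.trans (h12.trans h22))) (ne_of_lt (h12.trans h22)), ← hG]
  have id1 : (m₂ * G m₁ - m₁ * G m₂) / (m₂ - m₁)
      = G m₁ - m₁ * ((G m₂ - G m₁) / (m₂ - m₁)) := by
    have : m₂ - m₁ ≠ 0 := sub_ne_zero.mpr (ne_of_gt h12)
    field_simp
    ring
  have id2 : (m₂' * G m₁ - m₁ * G m₂') / (m₂' - m₁)
      = G m₁ - m₁ * ((G m₂' - G m₁) / (m₂' - m₁)) := by
    have : m₂' - m₁ ≠ 0 := sub_ne_zero.mpr (ne_of_gt (h12.trans h22))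
    field_simp
    ring
  rw [id1, id2]
  have := mul_le_mul_of_nonneg_left key h1.le
  linarith

/-- `aHat` is antitone in the first argument. -/
private lemma aHat_anti_fst {α p₀ m₁ m₁' m₂ : ℝ} (hα : 0 < α) (hα1 : α ≤ 1) (hp : 0 < p₀)
    (h1 : 0 < m₁) (h11 : m₁ ≤ m₁') (h12 : m₁' < m₂) :
    aHat α p₀ m₁' m₂ ≤ aHat α p₀ m₁ m₂ := by
  rcases eq_or_lt_of_le h11 with rfl | h11
  · exact le_refl _
  have hconv := G_convex (1 - α) p₀ (by linarith) (by linarith) hp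
  set G := Gfun (1 - α) p₀ with hG
  have h1' : 0 < m₁' := h1.trans h11
  have h2 : 0 < m₂ := h1'.trans h12
  have key := hconv.secant_mono (a := m₂) (x := m₁) (y := m₁') (mem_Ioi.mpr h2)
    (mem_Ioi.mpr h1) (mem_Ioi.mpr h1')
    (ne_of_lt (h11.trans h12)) (ne_of_lt h12) h11.le
  rw [aHat_eq (ne_of_gt h1) (ne_of_gt h2) (ne_of_lt (h11.trans h12)),
    aHat_eq (ne_of_gt h1') (ne_of_gt h2) (ne_of_lt h12), ← hG]
  have id1 : (m₂ * G m₁ - m₁ * G m₂) / (m₂ - m₁)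
      = G m₂ - m₂ * ((G m₁ - G m₂) / (m₁ - m₂)) := by
    have h : m₁ - m₂ ≠ 0 := sub_ne_zero.mpr (ne_of_lt (h11.trans h12))
    have h' : m₂ - m₁ ≠ 0 := sub_ne_zero.mpr (ne_of_gt (h11.trans h12))
    field_simp
    ring
  have id2 : (m₂ * G m₁' - m₁' * G m₂) / (m₂ - m₁')
      = G m₂ - m₂ * ((G m₁' - G m₂) / (m₁' - m₂)) := by
    have h : m₁' - m₂ ≠ 0 := sub_ne_zero.mpr (ne_of_lt h12)
    have h' : m₂ - m₁' ≠ 0 := sub_ne_zero.mpr (ne_of_gt h12)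
    field_simp
    ring
  rw [id1, id2]
  have := mul_le_mul_of_nonneg_left key h2.le
  linarith

private noncomputable def Phi (a b : ℝ) : ℝ :=
  a - (a * Real.log a - b * Real.log b - (a - b) * Real.log (a - b)) / Real.log 2

private lemma xlogx_deriv {y : ℝ} (hy : y ≠ 0) :
    HasDerivAt (fun t : ℝ => t * Real.log t) (Real.log y + 1) y := by
  have := (hasDerivAt_id y).mul (Real.hasDerivAt_log hy)
  refine this.congr_deriv ?_
  simp [hy]

private lemma ent_eq {a b : ℝ} (hb : 0 < b) (hba : b < a) :
    a * (1 - binEnt (b / a)) = Phi a b := by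
  have ha : 0 < a := hb.trans hba
  have hab : 0 < a - b := by linarith
  have h1 : 1 - b / a = (a - b) / a := by field_simp
  have hL : Real.log 2 ≠ 0 := ne_of_gt (Real.log_pos one_lt_two)
  rw [binEnt, Phi, Real.logb, Real.logb, h1, Real.log_div hb.ne' ha.ne',
    Real.log_div hab.ne' ha.ne']
  field_simp
  ring

private lemma Phi_hasDerivAt_fst {b x : ℝ} (hb : 0 < b) (hbx : b < x) :
    HasDerivAt (fun t : ℝ => Phi t b)
      (1 - (Real.log x - Real.log (x - b)) / Real.log 2) x := by
  have hx : (0:ℝ) < x := hb.trans hbx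
  have hxb : (0:ℝ) < x - b := by linarith
  have hA : HasDerivAt (fun t : ℝ => t * Real.log t) (Real.log x + 1) x := xlogx_deriv hx.ne'
  have hC : HasDerivAt (fun t : ℝ => (t - b) * Real.log (t - b)) (Real.log (x - b) + 1) x := by
    have houter := xlogx_deriv hxb.ne'
    have hinner : HasDerivAt (fun t : ℝ => t - b) 1 x := (hasDerivAt_id x).sub_const b
    exact (houter.comp x hinner).congr_deriv (mul_one _)
  have := (hasDerivAt_id x).sub
    (((hA.sub_const (b * Real.log b)).sub hC).div_const (Real.log 2))
  refine this.congr_deriv ?_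
  ring

private lemma Phi_hasDerivAt_snd {a y : ℝ} (hy : 0 < y) (hya : y < a) :
    HasDerivAt (fun t : ℝ => Phi a t)
      ((Real.log y - Real.log (a - y)) / Real.log 2) y := by
  have hay : (0:ℝ) < a - y := by linarith
  have hB : HasDerivAt (fun t : ℝ => t * Real.log t) (Real.log y + 1) y := xlogx_deriv hy.ne'
  have hC : HasDerivAt (fun t : ℝ => (a - t) * Real.log (a - t)) (-(Real.log (a - y) + 1)) y := by
    have houter := xlogx_deriv hay.ne'
    have hinner : HasDerivAt (fun t : ℝ => a - t) (-1) y := by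
      simpa using (hasDerivAt_id y).const_sub a
    have := houter.comp y hinner
    refine this.congr_deriv ?_
    ring
  have := (hasDerivAt_const y a).sub
    ((((hasDerivAt_const y (a * Real.log a)).sub hB).sub hC).div_const (Real.log 2))
  refine this.congr_deriv ?_
  ring

private lemma Phi_mono_fst {a a' b : ℝ} (hb : 0 < b) (h2b : 2 * b < a) (haa : a ≤ a') :
    Phi a b ≤ Phi a' b := by
  have hL : (0:ℝ) < Real.log 2 := Real.log_pos one_lt_two
  have hmono : MonotoneOn (fun t => Phi t b) (Ici a) := by
    apply monotoneOn_of_hasDerivWithinAt_nonneg (convex_Ici a)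
      (f' := fun x => 1 - (Real.log x - Real.log (x - b)) / Real.log 2)
    · intro x hx
      have hx' : b < x := by simp only [mem_Ici] at hx; linarith
      exact (Phi_hasDerivAt_fst hb hx').continuousAt.continuousWithinAt
    · intro x hx
      rw [interior_Ici] at hx
      have hx' : b < x := by simp only [mem_Ioi] at hx; linarith
      exact (Phi_hasDerivAt_fst hb hx').hasDerivWithinAt
    · intro x hx
      rw [interior_Ici] at hx
      simp only [mem_Ioi] at hx
      have hxb : (0:ℝ) < x - b := by linarith
      have hxx : x ≤ 2 * (x - b) := by linarith
      have hlog : Real.log x ≤ Real.log 2 + Real.log (x - b) := by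
        calc Real.log x ≤ Real.log (2 * (x - b)) :=
              Real.log_le_log (by linarith) hxx
          _ = Real.log 2 + Real.log (x - b) := Real.log_mul two_ne_zero hxb.ne'
      rw [sub_nonneg, div_le_one hL]
      linarith
  exact hmono (mem_Ici.mpr le_rfl) (mem_Ici.mpr haa) haa

private lemma Phi_anti_snd {a b b' : ℝ} (hb' : 0 < b') (hbb : b' ≤ b) (h2b : 2 * b < a) :
    Phi a b ≤ Phi a b' := by
  have hL : (0:ℝ) < Real.log 2 := Real.log_pos one_lt_two
  have hanti : AntitoneOn (fun t => Phi a t) (Icc b' b) := by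
    apply antitoneOn_of_hasDerivWithinAt_nonpos (convex_Icc b' b)
      (f' := fun y => (Real.log y - Real.log (a - y)) / Real.log 2)
    · intro y hy
      obtain ⟨hy1, hy2⟩ := hy
      have h1 : 0 < y := lt_of_lt_of_le hb' hy1
      have h2 : y < a := by linarith
      exact (Phi_hasDerivAt_snd h1 h2).continuousAt.continuousWithinAt
    · intro y hy
      rw [interior_Icc] at hy
      obtain ⟨hy1, hy2⟩ := hy
      have h1 : 0 < y := hb'.trans hy1
      have h2 : y < a := by linarith
      exact (Phi_hasDerivAt_snd h1 h2).hasDerivWithinAt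
    · intro y hy
      rw [interior_Icc] at hy
      obtain ⟨hy1, hy2⟩ := hy
      have h1 : 0 < y := hb'.trans hy1
      have h2 : y < a - y := by linarith
      have hlog : Real.log y ≤ Real.log (a - y) := Real.log_le_log h1 h2.le
      apply div_nonpos_of_nonpos_of_nonneg _ hL.le
      linarith
  exact hanti (mem_Icc.mpr ⟨le_rfl, hbb⟩) (mem_Icc.mpr ⟨hbb, le_rfl⟩) hbb

theorem stmt1 (α s p₀ μ₁ μ₂ ν₁ ν₂ : ℝ)
    (hα : 0 < α) (hα1 : α ≤ 1) (hs0 : 0 ≤ s) (hs : s < 1 / 2) (hp : 0 < p₀)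
    (hμ₁ : 0 < μ₁) (h₁ : μ₁ ≤ ν₁) (h₂ : μ₂ ≤ ν₂) (h₁₂ : μ₁ < μ₂) (hν : ν₁ < ν₂)
    (hpos : 0 < aHat α p₀ ν₁ ν₂)
    (hratio : bHat α s p₀ ν₁ / aHat α p₀ ν₁ ν₂ < 1 / 2) :
    aHat α p₀ ν₁ ν₂ * (1 - binEnt (bHat α s p₀ ν₁ / aHat α p₀ ν₁ ν₂))
      ≤ aHat α p₀ μ₁ μ₂ * (1 - binEnt (bHat α s p₀ μ₁ / aHat α p₀ μ₁ μ₂)) := by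
  set aν := aHat α p₀ ν₁ ν₂ with haν
  set aμ := aHat α p₀ μ₁ μ₂ with haμ
  set bν := bHat α s p₀ ν₁ with hbν
  set bμ := bHat α s p₀ μ₁ with hbμ
  have hν₁ : 0 < ν₁ := lt_of_lt_of_le hμ₁ h₁
  have hμν₂ : μ₁ < ν₂ := lt_of_lt_of_le h₁₂ h₂
  -- aν ≤ aμ
  have step1 : aν ≤ aHat α p₀ μ₁ ν₂ := aHat_anti_fst hα hα1 hp hμ₁ h₁ hν
  have step2 : aHat α p₀ μ₁ ν₂ ≤ aμ := aHat_anti_snd hα hα1 hp hμ₁ h₁₂ h₂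
  have haa : aν ≤ aμ := step1.trans step2
  -- b facts
  have hbμ0 : 0 < bμ := bHat_pos hα hs0 hp hμ₁
  have hbν0 : 0 < bν := bHat_pos hα hs0 hp hν₁
  have hbb : bμ ≤ bν := bHat_mono hα hα1 hs0 hp hμ₁ h₁
  have h2bν : 2 * bν < aν := by
    have := (div_lt_iff₀ hpos).mp hratio
    linarith
  have h2bν' : 2 * bν < aμ := lt_of_lt_of_le h2bν haa
  have hbνaν : bν < aν := by linarith
  have hbμaμ : bμ < aμ := by linarith
  calc aν * (1 - binEnt (bν / aν)) = Phi aν bν := ent_eq hbν0 hbνaν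
    _ ≤ Phi aμ bν := Phi_mono_fst hbν0 h2bν haa
    _ ≤ Phi aμ bμ := Phi_anti_snd hbμ0 hbb h2bν'
    _ = aμ * (1 - binEnt (bμ / aμ)) := (ent_eq hbμ0 hbμaμ).symm
end

section
/- Let 0 < ν_d ≤ ν_d′ and 0 < ν_s ≤ ν_s′. Assume âₑ(ν_d,ν_s′) > 0 and b̂ₑ(ν_d)/âₑ(ν_d,ν_s′) < 1/2. Then âₑ(ν_d,ν_s′)·(1 − h(b̂ₑ(ν_d)/âₑ(ν_d,ν_s′))) ≤ âₑ(ν_d′,ν_s)·(1 − h(b̂ₑ(ν_d′)/âₑ(ν_d′,ν_s))); i.e., the quantity âₑ(1 − h(b̂ₑ/âₑ)) is monotonically increasing in the true decoy intensity ν_d and monotonically decreasing in the true signal intensity ν_s. -/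
set_option maxHeartbeats 800000

/-- Estimate `b̂ₑ` with true decoy intensity `νd` and assumed decoy intensity `μd`. -/
noncomputable def bE (α s p₀ μd νd : ℝ) : ℝ :=
  ((s * (1 - Real.exp (-α * νd)) + p₀ / 2) * Real.exp μd - p₀ / 2) / μd

/-- Estimate `âₑ` with true intensities `νd, νs` and assumed intensities `μd, μs`. -/
noncomputable def aE (α p₀ μd μs νd νs : ℝ) : ℝ :=
  (μs ^ 2 * Real.exp μd * ((1 - Real.exp (-α * νd)) + p₀ * (1 - Real.exp (-μd)))
    - μd ^ 2 * Real.exp μs * ((1 - Real.exp (-α * νs)) + p₀ * (1 - Real.exp (-μs))))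
  / (μd * μs * (μs - μd))

lemma psi_ineq (m x : ℝ) (hm0 : 0 < m) (hmx : m ≤ x) (hx : x ≤ 1/2) :
    m * (Real.log (1 - x) - Real.log x) ≤ Real.log 2 + Real.log (1 - x) := by
  set f : ℝ → ℝ := fun y => (1 - m) * Real.log (1 - y) + m * Real.log y with hf
  have hder : ∀ y : ℝ, 0 < y → y < 1 →
      HasDerivAt f ((1 - m) * ((1 - y)⁻¹ * (-1)) + m * y⁻¹) y := by
    intro y hy hy1
    have h1 : HasDerivAt (fun y : ℝ => Real.log (1 - y)) ((1 - y)⁻¹ * (-1)) y := by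
      exact (Real.hasDerivAt_log (by linarith)).comp y ((hasDerivAt_id y).const_sub 1)
    have h2 : HasDerivAt Real.log y⁻¹ y := Real.hasDerivAt_log hy.ne'
    exact (h1.const_mul _).add (h2.const_mul _)
  have hanti : AntitoneOn f (Set.Icc m (1/2)) := by
    apply antitoneOn_of_deriv_nonpos (convex_Icc _ _)
    · intro y hy
      exact (hder y (lt_of_lt_of_le hm0 hy.1) (by linarith [hy.2])).continuousAt.continuousWithinAt
    · intro y hy
      rw [interior_Icc] at hy
      exact (hder y (lt_trans hm0 hy.1) (by linarith [hy.2])).differentiableAt.differentiableWithinAt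
    · intro y hy
      rw [interior_Icc] at hy
      have hy0 : 0 < y := lt_trans hm0 hy.1
      have hy1 : y < 1 := by linarith [hy.2]
      rw [(hder y hy0 hy1).deriv]
      have h1y : (1:ℝ) - y ≠ 0 := by linarith
      have he : (1 - m) * ((1 - y)⁻¹ * (-1)) + m * y⁻¹ = (m - y) / (y * (1 - y)) := by
        field_simp
        ring
      rw [he]
      apply div_nonpos_of_nonpos_of_nonneg (by linarith [hy.1]) (by nlinarith)
  have hmem1 : x ∈ Set.Icc m (1/2) := ⟨hmx, hx⟩
  have hmem2 : (1/2 : ℝ) ∈ Set.Icc m (1/2) := ⟨le_trans hmx hx, le_refl _⟩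
  have := hanti hmem1 hmem2 hx
  have hfx : f (1/2) = -Real.log 2 := by
    have : Real.log (1/2 : ℝ) = -Real.log 2 := by
      rw [one_div, Real.log_inv]
    simp only [hf]
    norm_num [this]
    ring
  rw [hfx] at this
  simp only [hf] at this
  linarith

lemma F_eq (a b : ℝ) (hb : 0 < b) (hba : b ≤ a / 2) :
    a * (1 - binEnt (b / a)) =
      a + (b * Real.log b + (a - b) * Real.log (a - b) - a * Real.log a) / Real.log 2 := by
  have ha : 0 < a := by linarith
  have hab : 0 < a - b := by linarith
  have hl2 : Real.log 2 ≠ 0 := (Real.log_pos (by norm_num)).ne'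
  unfold binEnt Real.logb
  have h1 : 1 - b / a = (a - b) / a := by field_simp
  rw [h1, Real.log_div hb.ne' ha.ne', Real.log_div hab.ne' ha.ne']
  field_simp
  ring

lemma key_mono (m a1 b1 a2 b2 : ℝ) (hm0 : 0 < m) (hm : m ≤ 1/2)
    (hb1 : 0 < b1) (hb12 : b1 ≤ b2)
    (hma1 : m * a1 ≤ b1) (hb1a : b1 ≤ a1 / 2)
    (hma2 : m * a2 ≤ b2)
    (hinc : b2 - b1 ≤ m * (a2 - a1)) :
    a1 * (1 - binEnt (b1 / a1)) ≤ a2 * (1 - binEnt (b2 / a2)) := by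
  obtain ⟨Δa, rfl⟩ : ∃ x, a2 = a1 + x := ⟨a2 - a1, by ring⟩
  obtain ⟨Δb, rfl⟩ : ∃ x, b2 = b1 + x := ⟨b2 - b1, by ring⟩
  have ha1 : 0 < a1 := by linarith
  have hΔb : 0 ≤ Δb := by linarith
  have hΔba : Δb ≤ m * Δa := by linarith [hinc]
  have hΔa : 0 ≤ Δa := by nlinarith
  have hb2a : b1 + Δb ≤ (a1 + Δa) / 2 := by nlinarith
  have hl2 : (0:ℝ) < Real.log 2 := Real.log_pos (by norm_num)
  -- pointwise facts on [0,1]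
  have hfacts : ∀ t : ℝ, 0 ≤ t → t ≤ 1 →
      0 < b1 + t * Δb ∧ 0 < a1 + t * Δa ∧ m * (a1 + t * Δa) ≤ b1 + t * Δb ∧
        b1 + t * Δb ≤ (a1 + t * Δa) / 2 := by
    intro t ht0 ht1
    refine ⟨by nlinarith, by nlinarith, by nlinarith, by nlinarith⟩
  have hderiv : ∀ t : ℝ, 0 ≤ t → t ≤ 1 →
      HasDerivAt (fun t : ℝ =>
        (a1 + t * Δa) + ((b1 + t * Δb) * Real.log (b1 + t * Δb)
          + ((a1 + t * Δa) - (b1 + t * Δb)) * Real.log ((a1 + t * Δa) - (b1 + t * Δb))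
          - (a1 + t * Δa) * Real.log (a1 + t * Δa)) / Real.log 2)
        (Δa + (Δb * (Real.log (b1 + t * Δb) + 1)
        + (Δa - Δb) * (Real.log ((a1 + t * Δa) - (b1 + t * Δb)) + 1)
        - Δa * (Real.log (a1 + t * Δa) + 1)) / Real.log 2) t := by
    intro t ht0 ht1
    obtain ⟨hB, hA, hmAB, hBA⟩ := hfacts t ht0 ht1
    have hAB : 0 < (a1 + t * Δa) - (b1 + t * Δb) := by linarith
    have hA' : HasDerivAt (fun t : ℝ => a1 + t * Δa) Δa t := by
      simpa using ((hasDerivAt_id t).mul_const Δa).const_add a1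
    have hB' : HasDerivAt (fun t : ℝ => b1 + t * Δb) Δb t := by
      simpa using ((hasDerivAt_id t).mul_const Δb).const_add b1
    have hAB' : HasDerivAt (fun t : ℝ => (a1 + t * Δa) - (b1 + t * Δb)) (Δa - Δb) t :=
      hA'.sub hB'
    have hmul : ∀ (u : ℝ → ℝ) (u' : ℝ), HasDerivAt u u' t → u t ≠ 0 →
        HasDerivAt (fun t => u t * Real.log (u t)) (u' * (Real.log (u t) + 1)) t := by
      intro u u' hu hu0
      have := (Real.hasDerivAt_mul_log hu0).comp t hu
      simpa [mul_comm, Function.comp_def] using this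
    exact hA'.add ((((hmul _ _ hB' hB.ne').add (hmul _ _ hAB' hAB.ne')).sub
      (hmul _ _ hA' hA.ne')).div_const _)
  have hmono : MonotoneOn (fun t : ℝ =>
      (a1 + t * Δa) + ((b1 + t * Δb) * Real.log (b1 + t * Δb)
        + ((a1 + t * Δa) - (b1 + t * Δb)) * Real.log ((a1 + t * Δa) - (b1 + t * Δb))
        - (a1 + t * Δa) * Real.log (a1 + t * Δa)) / Real.log 2) (Set.Icc (0:ℝ) 1) := by
    apply monotoneOn_of_deriv_nonneg (convex_Icc _ _)
    · intro t ht
      exact (hderiv t ht.1 ht.2).continuousAt.continuousWithinAt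
    · intro t ht
      rw [interior_Icc] at ht
      exact (hderiv t ht.1.le ht.2.le).differentiableAt.differentiableWithinAt
    · intro t ht
      rw [interior_Icc] at ht
      rw [(hderiv t ht.1.le ht.2.le).deriv]
      obtain ⟨hB, hA, hmAB, hBA⟩ := hfacts t ht.1.le ht.2.le
      have hAB : 0 < (a1 + t * Δa) - (b1 + t * Δb) := by linarith
      set B := b1 + t * Δb with hBdef
      set A := a1 + t * Δa with hAdef
      have hx2 : B / A ≤ 1/2 := by rw [div_le_iff₀ hA]; linarith
      have hmx : m ≤ B / A := by rw [le_div_iff₀ hA]; linarith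
      have hpsi := psi_ineq m (B / A) hm0 hmx hx2
      have h1x : (1:ℝ) - B / A = (A - B) / A := by field_simp
      rw [h1x, Real.log_div hAB.ne' hA.ne', Real.log_div hB.ne' hA.ne'] at hpsi
      have hlogmono : Real.log B ≤ Real.log (A - B) :=
        Real.log_le_log hB (by linarith)
      have h1 : Δb * (Real.log (A - B) - Real.log B)
          ≤ m * Δa * (Real.log (A - B) - Real.log B) :=
        mul_le_mul_of_nonneg_right hΔba (by linarith)
      have h2' := mul_le_mul_of_nonneg_left hpsi hΔa
      have hnum : 0 ≤ Δa * Real.log 2 + Δa * (Real.log (A - B) - Real.log A)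
          - Δb * (Real.log (A - B) - Real.log B) := by nlinarith [h1, h2']
      have heq : Δa + (Δb * (Real.log B + 1) + (Δa - Δb) * (Real.log (A - B) + 1)
          - Δa * (Real.log A + 1)) / Real.log 2
          = (Δa * Real.log 2 + Δa * (Real.log (A - B) - Real.log A)
              - Δb * (Real.log (A - B) - Real.log B)) / Real.log 2 := by
        field_simp
        ring
      rw [heq]
      exact div_nonneg hnum hl2.le
  have key := hmono (Set.mem_Icc.2 ⟨le_refl 0, by norm_num⟩)
    (Set.mem_Icc.2 ⟨by norm_num, le_refl 1⟩) (by norm_num : (0:ℝ) ≤ 1)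
  simp only [zero_mul, add_zero, one_mul] at key
  rw [F_eq a1 b1 hb1 hb1a, F_eq (a1 + Δa) (b1 + Δb) (by linarith) hb2a]
  convert key using 3 <;> ring

theorem stmt15 (α s p₀ μd μs νd νd' νs νs' : ℝ)
    (hα : 0 < α) (hα1 : α ≤ 1) (hs0 : 0 ≤ s) (hs : s ≤ 1 / 2) (hp : 0 < p₀)
    (hμd : 0 < μd) (hμ : μd < μs)
    (hνd : 0 < νd) (hνd' : νd ≤ νd') (hνs : 0 < νs) (hνs' : νs ≤ νs')
    (hpos : 0 < aE α p₀ μd μs νd νs')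
    (hratio : bE α s p₀ μd νd / aE α p₀ μd μs νd νs' < 1 / 2) :
    aE α p₀ μd μs νd νs' * (1 - binEnt (bE α s p₀ μd νd / aE α p₀ μd μs νd νs'))
      ≤ aE α p₀ μd μs νd' νs * (1 - binEnt (bE α s p₀ μd νd' / aE α p₀ μd μs νd' νs)) := by
  have hμs : 0 < μs := lt_trans hμd hμ
  have hμsd : 0 < μs - μd := by linarith
  unfold aE at hpos
  unfold aE bE at hratio ⊢
  -- compress exponential subexpressions
  obtain ⟨T1, hT1⟩ : ∃ x : ℝ, x = 1 - Real.exp (-α * νd) := ⟨_, rfl⟩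
  obtain ⟨T2, hT2⟩ : ∃ x : ℝ, x = 1 - Real.exp (-α * νd') := ⟨_, rfl⟩
  obtain ⟨U1, hU1⟩ : ∃ x : ℝ, x = 1 - Real.exp (-α * νs) := ⟨_, rfl⟩
  obtain ⟨U2, hU2⟩ : ∃ x : ℝ, x = 1 - Real.exp (-α * νs') := ⟨_, rfl⟩
  obtain ⟨Wd, hWd⟩ : ∃ x : ℝ, x = 1 - Real.exp (-μd) := ⟨_, rfl⟩
  obtain ⟨Ws, hWs⟩ : ∃ x : ℝ, x = 1 - Real.exp (-μs) := ⟨_, rfl⟩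
  obtain ⟨Ed, hEd⟩ : ∃ x : ℝ, x = Real.exp μd := ⟨_, rfl⟩
  obtain ⟨Es, hEs⟩ : ∃ x : ℝ, x = Real.exp μs := ⟨_, rfl⟩
  -- basic facts about them
  have hexple : ∀ x : ℝ, x ≤ 0 → Real.exp x ≤ 1 := by
    intro x hx
    simpa using Real.exp_le_exp.mpr hx
  have hEd0 : 0 < Ed := by rw [hEd]; exact Real.exp_pos _
  have hEs0 : 0 < Es := by rw [hEs]; exact Real.exp_pos _
  have hEd1 : 1 < Ed := by
    rw [hEd]
    calc (1:ℝ) = Real.exp 0 := Real.exp_zero.symm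
    _ < Real.exp μd := Real.exp_lt_exp.mpr hμd
  have hT10 : 0 ≤ T1 := by
    rw [hT1]
    have := hexple (-α * νd) (by linarith [mul_nonneg hα.le hνd.le])
    linarith
  have hT12 : T1 ≤ T2 := by
    rw [hT1, hT2]
    have := Real.exp_le_exp.mpr (by linarith [mul_le_mul_of_nonneg_left hνd' hα.le] : -α * νd' ≤ -α * νd)
    linarith
  have hU10 : 0 ≤ U1 := by
    rw [hU1]
    have := hexple (-α * νs) (by linarith [mul_nonneg hα.le hνs.le])
    linarith
  have hU12 : U1 ≤ U2 := by
    rw [hU1, hU2]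
    have := Real.exp_le_exp.mpr (by linarith [mul_le_mul_of_nonneg_left hνs' hα.le] : -α * νs' ≤ -α * νs)
    linarith
  have hU20 : 0 ≤ U2 := le_trans hU10 hU12
  have hWd0 : 0 ≤ Wd := by
    rw [hWd]
    have := hexple (-μd) (by linarith)
    linarith
  have hWs0 : 0 ≤ Ws := by
    rw [hWs]
    have := hexple (-μs) (by linarith)
    linarith
  have hEdWd : Ed * Wd = Ed - 1 := by
    rw [hEd, hWd, mul_sub, mul_one, ← Real.exp_add]
    have : μd + -μd = 0 := by ring
    rw [this, Real.exp_zero]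
  rw [← hT1, ← hU2, ← hWd, ← hWs, ← hEd, ← hEs] at hpos
  rw [← hT1, ← hU2, ← hWd, ← hWs, ← hEd, ← hEs] at hratio
  rw [← hT1, ← hT2, ← hU1, ← hU2, ← hWd, ← hWs, ← hEd, ← hEs]
  -- compress numerators and denominator
  obtain ⟨M1, hM1⟩ : ∃ x : ℝ, x = (s * T1 + p₀ / 2) * Ed - p₀ / 2 := ⟨_, rfl⟩
  obtain ⟨M2, hM2⟩ : ∃ x : ℝ, x = (s * T2 + p₀ / 2) * Ed - p₀ / 2 := ⟨_, rfl⟩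
  obtain ⟨N1, hN1⟩ : ∃ x : ℝ, x = μs ^ 2 * Ed * (T1 + p₀ * Wd) - μd ^ 2 * Es * (U2 + p₀ * Ws) :=
    ⟨_, rfl⟩
  obtain ⟨N2, hN2⟩ : ∃ x : ℝ, x = μs ^ 2 * Ed * (T2 + p₀ * Wd) - μd ^ 2 * Es * (U1 + p₀ * Ws) :=
    ⟨_, rfl⟩
  obtain ⟨D, hD⟩ : ∃ x : ℝ, x = μd * μs * (μs - μd) := ⟨_, rfl⟩
  rw [← hN1, ← hD] at hpos
  rw [← hM1, ← hN1, ← hD] at hratio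
  rw [← hM1, ← hM2, ← hN1, ← hN2, ← hD]
  have hDpos : 0 < D := by rw [hD]; exact mul_pos (mul_pos hμd hμs) hμsd
  -- arithmetic facts
  have hM1pos : 0 < M1 := by
    rw [hM1]
    linarith [mul_nonneg (mul_nonneg hs0 hT10) hEd0.le, mul_pos hp (by linarith : (0:ℝ) < Ed - 1)]
  have hM12 : M1 ≤ M2 := by
    rw [hM1, hM2]
    linarith [mul_nonneg (mul_nonneg hs0 (sub_nonneg.2 hT12)) hEd0.le]
  have hN12 : N1 ≤ N2 := by
    rw [hN1, hN2]
    linarith [mul_nonneg (mul_nonneg (sq_nonneg μs) hEd0.le) (sub_nonneg.2 hT12),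
      mul_nonneg (mul_nonneg (sq_nonneg μd) hEs0.le) (sub_nonneg.2 hU12)]
  have hb1 : 0 < M1 / μd := div_pos hM1pos hμd
  have hb12 : M1 / μd ≤ M2 / μd := by gcongr
  have ha12 : N1 / D ≤ N2 / D := by gcongr
  have hb1a : M1 / μd ≤ (N1 / D) / 2 := by
    have := (div_lt_iff₀ hpos).1 hratio
    linarith
  have hN1pos : 0 < N1 := by
    have h := mul_pos hpos hDpos
    rwa [div_mul_cancel₀ _ hDpos.ne'] at h
  have ha2pos : 0 < N2 / D := div_pos (by linarith) hDpos
  rcases eq_or_lt_of_le hs0 with hs' | hs'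
  · -- case s = 0
    have hM1M2 : M1 = M2 := by rw [hM1, hM2, ← hs']; ring
    refine key_mono ((M1 / μd) / (N2 / D)) _ _ _ _ (div_pos hb1 ha2pos) ?_ hb1 ?_ ?_ hb1a ?_ ?_
    · have h1 : (M1 / μd) / (N2 / D) ≤ (M1 / μd) / (N1 / D) :=
        div_le_div_of_nonneg_left hb1.le hpos ha12
      linarith
    · rw [hM1M2]
    · calc (M1 / μd) / (N2 / D) * (N1 / D) ≤ (M1 / μd) / (N2 / D) * (N2 / D) := by
            exact mul_le_mul_of_nonneg_left ha12 (div_pos hb1 ha2pos).le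
      _ = M1 / μd := div_mul_cancel₀ _ ha2pos.ne'
    · rw [div_mul_cancel₀ _ ha2pos.ne', hM1M2]
    · have h0 : M2 / μd - M1 / μd = 0 := by rw [hM1M2]; ring
      rw [h0]
      exact mul_nonneg (div_pos hb1 ha2pos).le (by linarith)
  · -- case s > 0
    have hm0 : 0 < s * (μs - μd) / μs := div_pos (mul_pos hs' hμsd) hμs
    have hm : s * (μs - μd) / μs ≤ 1 / 2 := by
      rw [div_le_iff₀ hμs]
      linarith [mul_le_mul_of_nonneg_right hs hμsd.le, hμd]
    -- key polynomial inequalities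
    have e1 : ∀ T U : ℝ, μs ^ 2 * ((s * T + p₀ / 2) * Ed - p₀ / 2)
        - s * (μs ^ 2 * Ed * (T + p₀ * Wd) - μd ^ 2 * Es * (U + p₀ * Ws))
        = μs ^ 2 * p₀ * (1 / 2 - s) * (Ed - 1) + s * (μd ^ 2 * Es * (U + p₀ * Ws)) := by
      intro T U
      linear_combination (-(μs ^ 2 * p₀ * s)) * hEdWd
    have hkey : ∀ T U : ℝ, 0 ≤ U →
        s * (μs ^ 2 * Ed * (T + p₀ * Wd) - μd ^ 2 * Es * (U + p₀ * Ws))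
          ≤ μs ^ 2 * ((s * T + p₀ / 2) * Ed - p₀ / 2) := by
      intro T U hU
      have h1 : 0 ≤ μs ^ 2 * p₀ * (1 / 2 - s) * (Ed - 1) := by
        apply mul_nonneg
        apply mul_nonneg (mul_nonneg (sq_nonneg μs) hp.le) (by linarith)
        linarith
      have h2 : 0 ≤ s * (μd ^ 2 * Es * (U + p₀ * Ws)) := by
        apply mul_nonneg hs0
        apply mul_nonneg (mul_nonneg (sq_nonneg μd) hEs0.le)
        linarith [mul_nonneg hp.le hWs0, hU]
      linarith [e1 T U]
    have key3a : s * N1 ≤ μs ^ 2 * M1 := by rw [hN1, hM1]; exact hkey T1 U2 hU20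
    have key3b : s * N2 ≤ μs ^ 2 * M2 := by rw [hN2, hM2]; exact hkey T2 U1 hU10
    have key5 : (M2 - M1) * μs ^ 2 ≤ s * (N2 - N1) := by
      rw [hM1, hM2, hN1, hN2]
      linarith [mul_nonneg hs0 (mul_nonneg (mul_nonneg (sq_nonneg μd) hEs0.le)
        (sub_nonneg.2 hU12))]
    have hrw1 : s * (μs - μd) / μs * (N1 / D) = s * N1 / (μd * μs ^ 2) := by
      rw [hD]; field_simp
    have hrw2 : s * (μs - μd) / μs * (N2 / D) = s * N2 / (μd * μs ^ 2) := by
      rw [hD]; field_simp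
    refine key_mono (s * (μs - μd) / μs) _ _ _ _ hm0 hm hb1 hb12 ?_ hb1a ?_ ?_
    · rw [hrw1, div_le_div_iff₀ (by positivity) hμd]
      linarith [mul_le_mul_of_nonneg_right key3a hμd.le]
    · rw [hrw2, div_le_div_iff₀ (by positivity) hμd]
      linarith [mul_le_mul_of_nonneg_right key3b hμd.le]
    · have hsub : M2 / μd - M1 / μd = (M2 - M1) / μd := (sub_div _ _ _).symm
      have hsub2 : s * (μs - μd) / μs * (N2 / D - N1 / D)
          = s * (N2 - N1) / (μd * μs ^ 2) := by
        rw [hD]; field_simp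
      rw [hsub, hsub2, div_le_div_iff₀ hμd (by positivity)]
      linarith [mul_le_mul_of_nonneg_right key5 hμd.le]
end
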